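/- Suppose n ≥ (k−t)(k−t+1) + t, k ≥ t+3, and F ⊆ C([n],k) is a t-intersecting family. Then |F| ≤ (k−t+1)^{τ_t(F)−t} · C(τ_t(F), t) · C(n−τ_t(F), k−τ_t(F)). -/

import Mathlib

open Finset

def Intersecting (t : ℕ) (𝓕 : Finset (Finset ℕ)) : Prop :=
  ∀ A ∈ 𝓕, ∀ B ∈ 𝓕, t ≤ (A ∩ B).card

def IsCover (n t : ℕ) (𝓕 : Finset (Finset ℕ)) (S : Finset ℕ) : Prop :=
  S ⊆ Finset.range n ∧ ∀ A ∈ 𝓕, t ≤ (S ∩ A).card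

noncomputable def tau (n t : ℕ) (𝓕 : Finset (Finset ℕ)) : ℕ :=
  sInf {m | ∃ S, IsCover n t 𝓕 S ∧ S.card = m}

open Classical in
noncomputable def minCovers (n t : ℕ) (𝓕 : Finset (Finset ℕ)) : Finset (Finset ℕ) :=
  ((Finset.range n).powerset).filter
    (fun S => (∀ A ∈ 𝓕, t ≤ (S ∩ A).card) ∧ S.card = tau n t 𝓕)

def MaximalIntersecting (n k t : ℕ) (𝓕 : Finset (Finset ℕ)) : Prop :=
  𝓕 ⊆ (Finset.range n).powersetCard k ∧ Intersecting t 𝓕 ∧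
    ∀ 𝓖 : Finset (Finset ℕ), 𝓖 ⊆ (Finset.range n).powersetCard k →
      Intersecting t 𝓖 → 𝓕 ⊆ 𝓖 → 𝓖 = 𝓕

lemma choose_add_le_pow (m d : ℕ) : (m + d).choose d ≤ (m + 1) ^ d := by
  induction d with
  | zero => simp
  | succ d ih =>
    have h1 : (m + d + 1) * (m + d).choose d = (m + (d+1)).choose (d + 1) * (d + 1) :=
      Nat.add_one_mul_choose_eq (m + d) d
    have h2 : (m + (d+1)).choose (d+1) * (d+1) ≤ ((m+1)^(d+1)) * (d+1) := by
      calc (m + (d+1)).choose (d+1) * (d+1) = (m + d + 1) * (m + d).choose d := h1.symm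
      _ ≤ ((m+1)*(d+1)) * ((m+1)^d) := by
          apply Nat.mul_le_mul _ ih
          nlinarith
      _ = ((m+1)^(d+1)) * (d+1) := by ring
    exact Nat.le_of_mul_le_mul_right h2 (Nat.succ_pos d)

lemma mono_step (n k t j : ℕ) (htj : t ≤ j) (hjk : j < k)
    (hn : (k - t) * (k - t + 1) + t ≤ n) :
    (k - t + 1) * (n - (j+1)).choose (k - (j+1)) ≤ (n - j).choose (k - j) := by
  have hd : k - t = (k - j) + (j - t) := by omega
  have h2 : (k-t)*(k-t+1) = (k-j)*(k-t+1) + (j-t)*(k-t+1) := by rw [hd]; ring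
  have h3 : j - t ≤ (j-t)*(k-t+1) := Nat.le_mul_of_pos_right _ (by omega)
  have key : (k-j)*(k-t+1) + j ≤ n := by
    rw [h2] at hn
    have hj : (j - t) + t = j := by omega
    linarith
  have hjn : j < n := by
    have : 1 * 1 ≤ (k-j)*(k-t+1) := Nat.mul_le_mul (by omega) (by omega)
    omega
  have hid : (n-j) * ((n-j-1).choose (k-j-1)) = (n-j).choose (k-j) * (k-j) := by
    have h := Nat.add_one_mul_choose_eq (n-j-1) (k-j-1)
    have e1 : n-j-1+1 = n-j := by omega
    have e2 : k-j-1+1 = k-j := by omega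
    rw [e1, e2] at h
    exact h
  apply Nat.le_of_mul_le_mul_right _ (show 0 < k - j by omega)
  calc (k-t+1) * (n-(j+1)).choose (k-(j+1)) * (k-j)
      = (k-j)*(k-t+1) * ((n-j-1).choose (k-j-1)) := by
        rw [show n-(j+1) = n-j-1 from by omega, show k-(j+1)=k-j-1 from by omega]; ring
    _ ≤ (n-j) * ((n-j-1).choose (k-j-1)) := by
        apply Nat.mul_le_mul_right
        exact Nat.le_sub_of_add_le key
    _ = (n-j).choose (k-j) * (k-j) := hid

lemma mono_chain (n k t τ : ℕ) (htτ : t ≤ τ)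
    (hn : (k - t) * (k - t + 1) + t ≤ n) :
    ∀ s, τ ≤ s → s ≤ k →
      (n - s).choose (k - s) * (k-t+1)^s ≤ (n - τ).choose (k - τ) * (k-t+1)^τ := by
  intro s
  induction s with
  | zero =>
    intro h1 _
    obtain rfl : τ = 0 := by omega
    exact le_refl _
  | succ s ih =>
    intro h1 h2
    rcases Nat.eq_or_lt_of_le h1 with h | h
    · rw [← h]
    · have hs1 : τ ≤ s := by omega
      calc (n - (s+1)).choose (k - (s+1)) * (k-t+1)^(s+1)
          = ((k-t+1) * (n - (s+1)).choose (k - (s+1))) * (k-t+1)^s := by ring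
        _ ≤ (n - s).choose (k - s) * (k-t+1)^s := by
            apply Nat.mul_le_mul_right
            exact mono_step n k t s (by omega) (by omega) hn
        _ ≤ (n - τ).choose (k - τ) * (k-t+1)^τ := ih hs1 (by omega)

lemma keyA (n k t τ : ℕ) (hk : t + 3 ≤ k)
    (hn : (k - t) * (k - t + 1) + t ≤ n)
    (𝓕 : Finset (Finset ℕ)) (h𝓕 : 𝓕 ⊆ (Finset.range n).powersetCard k)
    (hint : Intersecting t 𝓕)
    (htτ : t ≤ τ)
    (hmin : ∀ S : Finset ℕ, IsCover n t 𝓕 S → τ ≤ S.card) :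
    ∀ r B, τ - B.card ≤ r → B ⊆ Finset.range n → t ≤ B.card →
      (𝓕.filter (fun F => B ⊆ F)).card * (k-t+1)^B.card
        ≤ (n - τ).choose (k - τ) * (k-t+1)^τ := by
  have base : ∀ B : Finset ℕ, B ⊆ Finset.range n → t ≤ B.card → τ ≤ B.card →
      (𝓕.filter (fun F => B ⊆ F)).card * (k-t+1)^B.card
        ≤ (n - τ).choose (k - τ) * (k-t+1)^τ := by
    intro B hBn htB hτB
    rcases Finset.eq_empty_or_nonempty (𝓕.filter (fun F => B ⊆ F)) with he | ⟨F₀, hF₀⟩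
    · rw [he]; simp
    · simp only [mem_filter] at hF₀
      have hF₀c := h𝓕 hF₀.1
      rw [Finset.mem_powersetCard] at hF₀c
      have hBk : B.card ≤ k := hF₀c.2 ▸ Finset.card_le_card hF₀.2
      have hcount : (𝓕.filter (fun F => B ⊆ F)).card
          ≤ (n - B.card).choose (k - B.card) := by
        have : (𝓕.filter (fun F => B ⊆ F)).card
            ≤ ((Finset.range n \ B).powersetCard (k - B.card)).card := by
          apply Finset.card_le_card_of_injOn (fun F => F \ B)
          · intro F hF
            simp only [coe_filter, Set.mem_setOf_eq] at hF
            have hFc := h𝓕 hF.1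
            rw [Finset.mem_powersetCard] at hFc
            simp only [Finset.mem_coe, Finset.mem_powersetCard]
            constructor
            · exact Finset.sdiff_subset_sdiff hFc.1 (le_refl B)
            · rw [Finset.card_sdiff_of_subset hF.2, hFc.2]
          · intro F₁ h₁ F₂ h₂ he
            simp only [coe_filter, Set.mem_setOf_eq] at h₁ h₂
            have e1 : F₁ \ B ∪ B = F₁ := Finset.sdiff_union_of_subset h₁.2
            have e2 : F₂ \ B ∪ B = F₂ := Finset.sdiff_union_of_subset h₂.2
            have he' : F₁ \ B = F₂ \ B := he
            rw [← e1, ← e2, he']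
        rwa [Finset.card_powersetCard, Finset.card_sdiff_of_subset hBn, Finset.card_range] at this
      calc (𝓕.filter (fun F => B ⊆ F)).card * (k-t+1)^B.card
          ≤ (n - B.card).choose (k - B.card) * (k-t+1)^B.card :=
            Nat.mul_le_mul_right _ hcount
        _ ≤ (n - τ).choose (k - τ) * (k-t+1)^τ :=
            mono_chain n k t τ htτ hn B.card hτB hBk
  intro r
  induction r with
  | zero =>
    intro B hr hBn htB
    exact base B hBn htB (by omega)
  | succ r ih =>
    intro B hr hBn htB
    rcases le_or_gt τ B.card with hτB | hτB
    · exact base B hBn htB hτB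
    · -- B is not a t-cover
      have hnc : ¬ IsCover n t 𝓕 B := fun hC => by have := hmin B hC; omega
      have hex : ∃ G ∈ 𝓕, (B ∩ G).card < t := by
        by_contra hc
        push_neg at hc
        exact hnc ⟨hBn, fun A hA => hc A hA⟩
      obtain ⟨G, hG, hGB⟩ := hex
      have hGc := h𝓕 hG
      rw [Finset.mem_powersetCard] at hGc
      set d := t - (B ∩ G).card with hd
      have hd1 : 1 ≤ d := by omega
      -- covering by biUnion
      have hsub : 𝓕.filter (fun F => B ⊆ F) ⊆
          ((G \ B).powersetCard d).biUnion
            (fun D => 𝓕.filter (fun F => B ∪ D ⊆ F)) := by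
        intro F hF
        simp only [mem_filter] at hF
        obtain ⟨hF𝓕, hBF⟩ := hF
        have hFG : t ≤ (F ∩ G).card := hint F hF𝓕 G hG
        have h1 : ((F ∩ G) ∩ B).card + ((F ∩ G) \ B).card = (F ∩ G).card :=
          Finset.card_inter_add_card_sdiff _ _
        have h2 : ((F ∩ G) ∩ B).card ≤ (B ∩ G).card := by
          apply Finset.card_le_card
          intro x hx
          simp only [mem_inter] at hx ⊢
          exact ⟨hx.2, hx.1.2⟩
        have hdle : d ≤ ((F ∩ G) \ B).card := by omega
        obtain ⟨D, hD, hDc⟩ := Finset.exists_subset_card_eq hdle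
        rw [Finset.mem_biUnion]
        refine ⟨D, ?_, ?_⟩
        · rw [Finset.mem_powersetCard]
          exact ⟨hD.trans (Finset.sdiff_subset_sdiff Finset.inter_subset_right (le_refl B)), hDc⟩
        · rw [mem_filter]
          refine ⟨hF𝓕, Finset.union_subset hBF ?_⟩
          intro x hx
          have := hD hx
          simp only [mem_sdiff, mem_inter] at this
          exact this.1.1
      have hcard : (𝓕.filter (fun F => B ⊆ F)).card ≤
          ∑ D ∈ (G \ B).powersetCard d, (𝓕.filter (fun F => B ∪ D ⊆ F)).card :=
        le_trans (Finset.card_le_card hsub) (Finset.card_biUnion_le)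
      have hGBc : (G \ B).card = (k - t) + d := by
        have h3 : (G ∩ B).card + (G \ B).card = G.card :=
          Finset.card_inter_add_card_sdiff _ _
        have h4 : (G ∩ B).card = (B ∩ G).card := by rw [Finset.inter_comm]
        omega
      have hpc : ((G \ B).powersetCard d).card ≤ (k-t+1)^d := by
        rw [Finset.card_powersetCard, hGBc]
        exact choose_add_le_pow (k-t) d
      -- apply IH termwise
      have hterm : ∀ D ∈ (G \ B).powersetCard d,
          (𝓕.filter (fun F => B ∪ D ⊆ F)).card * (k-t+1)^(B.card + d)
            ≤ (n - τ).choose (k - τ) * (k-t+1)^τ := by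
        intro D hD
        rw [Finset.mem_powersetCard] at hD
        have hdisj : Disjoint B D := by
          rw [Finset.disjoint_right]
          intro x hx
          have := hD.1 hx
          simp only [mem_sdiff] at this
          exact this.2
        have hcu : (B ∪ D).card = B.card + d := by
          rw [Finset.card_union_of_disjoint hdisj, hD.2]
        have hBDn : B ∪ D ⊆ Finset.range n :=
          Finset.union_subset hBn ((hD.1.trans (Finset.sdiff_subset)).trans hGc.1)
        have := ih (B ∪ D) (by omega) hBDn (by omega)
        rwa [hcu] at this
      apply Nat.le_of_mul_le_mul_right _ (show 0 < (k-t+1)^d by positivity)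
      calc (𝓕.filter (fun F => B ⊆ F)).card * (k-t+1)^B.card * (k-t+1)^d
          = (𝓕.filter (fun F => B ⊆ F)).card * (k-t+1)^(B.card + d) := by
            rw [pow_add]; ring
        _ ≤ (∑ D ∈ (G \ B).powersetCard d, (𝓕.filter (fun F => B ∪ D ⊆ F)).card)
              * (k-t+1)^(B.card + d) := Nat.mul_le_mul_right _ hcard
        _ = ∑ D ∈ (G \ B).powersetCard d,
              (𝓕.filter (fun F => B ∪ D ⊆ F)).card * (k-t+1)^(B.card + d) := by
            rw [Finset.sum_mul]
        _ ≤ ∑ _D ∈ (G \ B).powersetCard d, (n - τ).choose (k - τ) * (k-t+1)^τ :=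
            Finset.sum_le_sum hterm
        _ = ((G \ B).powersetCard d).card * ((n - τ).choose (k - τ) * (k-t+1)^τ) := by
            rw [Finset.sum_const, smul_eq_mul]
        _ ≤ (k-t+1)^d * ((n - τ).choose (k - τ) * (k-t+1)^τ) :=
            Nat.mul_le_mul_right _ hpc
        _ = (n - τ).choose (k - τ) * (k-t+1)^τ * (k-t+1)^d := by ring

theorem stmt6 (n k t : ℕ) (ht : 1 ≤ t) (hk : t + 3 ≤ k)
    (hn : (k - t) * (k - t + 1) + t ≤ n)
    (𝓕 : Finset (Finset ℕ)) (h𝓕 : 𝓕 ⊆ (Finset.range n).powersetCard k)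
    (hint : Intersecting t 𝓕) :
    𝓕.card ≤ (k - t + 1) ^ (tau n t 𝓕 - t) * (tau n t 𝓕).choose t *
      (n - tau n t 𝓕).choose (k - tau n t 𝓕) := by
  rcases Finset.eq_empty_or_nonempty 𝓕 with rfl | ⟨F₀, hF₀⟩
  · simp
  · have hF₀c := h𝓕 hF₀
    rw [Finset.mem_powersetCard] at hF₀c
    have hne : {m | ∃ S, IsCover n t 𝓕 S ∧ S.card = m}.Nonempty :=
      ⟨k, F₀, ⟨hF₀c.1, fun A hA => hint F₀ hF₀ A hA⟩, hF₀c.2⟩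
    set τ := tau n t 𝓕 with hτdef
    obtain ⟨T, hT, hTc⟩ : ∃ S, IsCover n t 𝓕 S ∧ S.card = τ := Nat.sInf_mem hne
    have hmin : ∀ S : Finset ℕ, IsCover n t 𝓕 S → τ ≤ S.card :=
      fun S hS => Nat.sInf_le ⟨S, hS, rfl⟩
    have htτ : t ≤ τ := by
      have h1 : t ≤ (T ∩ F₀).card := hT.2 F₀ hF₀
      have h2 : (T ∩ F₀).card ≤ T.card := Finset.card_le_card Finset.inter_subset_left
      omega
    have hτk : τ ≤ k :=
      Nat.sInf_le ⟨F₀, ⟨hF₀c.1, fun A hA => hint F₀ hF₀ A hA⟩, hF₀c.2⟩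
    -- cover 𝓕 by t-subsets of T
    have hsub : 𝓕 ⊆ (T.powersetCard t).biUnion
        (fun S => 𝓕.filter (fun F => S ⊆ F)) := by
      intro F hF
      have h1 : t ≤ (T ∩ F).card := hT.2 F hF
      obtain ⟨S, hS, hSc⟩ := Finset.exists_subset_card_eq h1
      rw [Finset.mem_biUnion]
      refine ⟨S, ?_, ?_⟩
      · rw [Finset.mem_powersetCard]
        exact ⟨hS.trans Finset.inter_subset_left, hSc⟩
      · rw [mem_filter]
        exact ⟨hF, hS.trans Finset.inter_subset_right⟩
    have hterm : ∀ S ∈ T.powersetCard t,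
        (𝓕.filter (fun F => S ⊆ F)).card * (k-t+1)^t
          ≤ (n - τ).choose (k - τ) * (k-t+1)^τ := by
      intro S hS
      rw [Finset.mem_powersetCard] at hS
      have := keyA n k t τ hk hn 𝓕 h𝓕 hint htτ hmin τ S (by omega)
        (hS.1.trans hT.1) (by omega)
      rwa [hS.2] at this
    have hpc : (T.powersetCard t).card = τ.choose t := by
      rw [Finset.card_powersetCard, hTc]
    have hmain : 𝓕.card * (k-t+1)^t ≤
        τ.choose t * ((n - τ).choose (k - τ) * (k-t+1)^τ) := by
      calc 𝓕.card * (k-t+1)^t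
          ≤ (∑ S ∈ T.powersetCard t, (𝓕.filter (fun F => S ⊆ F)).card) * (k-t+1)^t := by
            apply Nat.mul_le_mul_right
            exact le_trans (Finset.card_le_card hsub) Finset.card_biUnion_le
        _ = ∑ S ∈ T.powersetCard t, (𝓕.filter (fun F => S ⊆ F)).card * (k-t+1)^t := by
            rw [Finset.sum_mul]
        _ ≤ ∑ _S ∈ T.powersetCard t, (n - τ).choose (k - τ) * (k-t+1)^τ :=
            Finset.sum_le_sum hterm
        _ = (T.powersetCard t).card * ((n - τ).choose (k - τ) * (k-t+1)^τ) := by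
            rw [Finset.sum_const, smul_eq_mul]
        _ = τ.choose t * ((n - τ).choose (k - τ) * (k-t+1)^τ) := by rw [hpc]
    have hpow : (k-t+1)^τ = (k-t+1)^(τ-t) * (k-t+1)^t := by
      rw [← pow_add]
      congr 1
      omega
    rw [hpow] at hmain
    have hfin : 𝓕.card * (k-t+1)^t ≤
        ((k-t+1)^(τ-t) * τ.choose t * (n - τ).choose (k - τ)) * (k-t+1)^t := by
      calc 𝓕.card * (k-t+1)^t
          ≤ τ.choose t * ((n - τ).choose (k - τ) * ((k-t+1)^(τ-t) * (k-t+1)^t)) := hmain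
        _ = ((k-t+1)^(τ-t) * τ.choose t * (n - τ).choose (k - τ)) * (k-t+1)^t := by ring
    exact Nat.le_of_mul_le_mul_right hfin (by positivity)
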